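/- arXiv:2109.11169 — 5 statements merged into one kernel-verified Lean document; each statement's English description precedes it below -/
import Mathlib

section
/- Let f : ℝⁿ → ℝⁿ be an affine map and v : ℝⁿ → ℝ a convex, radially unbounded function that is bounded from below. Let K := {x ∈ ℝⁿ : v(x) ≤ R} for some R ∈ ℝ. If v(f(x)) ≤ v(x) for all x on the boundary ∂K of K, then K is a compact convex set that is forward invariant for the system x⁺ = f(x), i.e., f(K) ⊆ K. -/
theorem sublevel_set_forward_invariant {n : ℕ}
    (f : (Fin n → ℝ) →ᵃ[ℝ] (Fin n → ℝ))
    (v : (Fin n → ℝ) → ℝ) (R : ℝ)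
    (hconv : ConvexOn ℝ Set.univ v)
    (hcont : Continuous v)
    (hbdd : ∃ m : ℝ, ∀ x, m ≤ v x)
    (hradial : ∀ c : ℝ, ∃ r : ℝ, ∀ x : Fin n → ℝ, r ≤ ‖x‖ → c ≤ v x)
    (K : Set (Fin n → ℝ)) (hK : K = {x | v x ≤ R})
    (hdec : ∀ x ∈ frontier K, v (f x) ≤ v x) :
    IsCompact K ∧ Convex ℝ K ∧ ∀ x ∈ K, f x ∈ K := by
  have hKclosed : IsClosed K := by
    rw [hK]; exact isClosed_le hcont continuous_const
  obtain ⟨r, hr⟩ := hradial (R + 1)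
  have hKsub : K ⊆ Metric.closedBall 0 (max r 0) := by
    intro x hx
    rw [hK] at hx
    simp only [Metric.mem_closedBall, dist_zero_right]
    by_contra h
    push_neg at h
    have := hr x (le_of_lt (lt_of_le_of_lt (le_max_left _ _) h))
    simp only [Set.mem_setOf_eq] at hx
    linarith
  have hKcompact : IsCompact K :=
    (isCompact_closedBall _ _).of_isClosed_subset hKclosed hKsub
  have hKconv : Convex ℝ K := by
    rw [hK]
    simpa using hconv.convex_le R
  refine ⟨hKcompact, hKconv, ?_⟩
  intro x hx
  rcases Nat.eq_zero_or_pos n with hn | hn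
  · subst hn
    haveI : Subsingleton (Fin 0 → ℝ) := ⟨fun a b => funext fun i => i.elim0⟩
    rwa [Subsingleton.elim (f x) x]
  · set e : Fin n → ℝ := Pi.single (⟨0, hn⟩ : Fin n) (1 : ℝ) with he
    have hne : ‖e‖ = 1 := by
      rw [he, Pi.norm_single, norm_one]
    set S : Set ℝ := {t : ℝ | x + t • e ∈ K} with hS
    have hScl : IsClosed S := by
      have : Continuous fun t : ℝ => x + t • e := by continuity
      exact hKclosed.preimage this
    have h0S : (0 : ℝ) ∈ S := by simpa [hS] using hx
    have hSbdd : S ⊆ Set.Icc (-(‖x‖ + max r 0)) (‖x‖ + max r 0) := by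
      intro t ht
      have h1 : ‖x + t • e‖ ≤ max r 0 := by
        have := hKsub ht
        simpa [dist_zero_right] using this
      have h2 : ‖t • e‖ ≤ ‖x‖ + max r 0 := by
        calc ‖t • e‖ = ‖(x + t • e) - x‖ := by ring_nf
          _ ≤ ‖x + t • e‖ + ‖x‖ := norm_sub_le _ _
          _ ≤ max r 0 + ‖x‖ := by linarith
          _ = ‖x‖ + max r 0 := by ring
      have h3 : |t| ≤ ‖x‖ + max r 0 := by
        rwa [norm_smul, hne, mul_one, Real.norm_eq_abs] at h2
      exact abs_le.mp h3
    have hScompact : IsCompact S :=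
      isCompact_Icc.of_isClosed_subset hScl hSbdd
    have hSne : S.Nonempty := ⟨0, h0S⟩
    set a := sInf S with ha
    set b := sSup S with hb
    have haS : a ∈ S := hScompact.sInf_mem hSne
    have hbS : b ∈ S := hScompact.sSup_mem hSne
    have hbddB : BddBelow S := hScompact.bddBelow
    have hbddA : BddAbove S := hScompact.bddAbove
    have ha0 : a ≤ 0 := csInf_le hbddB h0S
    have hb0 : 0 ≤ b := le_csSup hbddA h0S
    -- frontier membership for the endpoints
    have hfront : ∀ t : ℝ, t ∈ S → (t = a ∨ t = b) → x + t • e ∈ frontier K := by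
      intro t htS htab
      rw [frontier_eq_closure_inter_closure, hKclosed.closure_eq]
      refine ⟨htS, ?_⟩
      rw [mem_closure_iff]
      intro o ho hmem
      rcases Metric.isOpen_iff.mp ho _ hmem with ⟨ε, hε, hball⟩
      rcases htab with rfl | rfl
      · refine ⟨x + (a - ε / 2) • e, hball ?_, ?_⟩
        · rw [Metric.mem_ball, dist_eq_norm]
          have : (x + (a - ε / 2) • e) - (x + a • e) = (-(ε / 2)) • e := by
            module
          rw [this, norm_smul, hne, mul_one, Real.norm_eq_abs]
          rw [abs_neg, abs_of_pos (by linarith)]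
          linarith
        · intro hmem'
          have : a ≤ a - ε / 2 := csInf_le hbddB hmem'
          linarith
      · refine ⟨x + (b + ε / 2) • e, hball ?_, ?_⟩
        · rw [Metric.mem_ball, dist_eq_norm]
          have : (x + (b + ε / 2) • e) - (x + b • e) = (ε / 2) • e := by
            module
          rw [this, norm_smul, hne, mul_one, Real.norm_eq_abs]
          rw [abs_of_pos (by linarith)]
          linarith
        · intro hmem'
          have : b + ε / 2 ≤ b := le_csSup hbddA hmem'
          linarith
    have hyfr : x + a • e ∈ frontier K := hfront a haS (Or.inl rfl)
    have hzfr : x + b • e ∈ frontier K := hfront b hbS (Or.inr rfl)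
    rcases eq_or_lt_of_le (le_trans ha0 hb0) with hab | hab
    · -- a = b = 0, so x is on the frontier
      have ha' : a = 0 := le_antisymm ha0 (hab ▸ hb0)
      have hxfr : x ∈ frontier K := by
        have := hyfr
        rwa [ha', zero_smul, add_zero] at this
      have h1 : v (f x) ≤ v x := hdec x hxfr
      rw [hK] at hx ⊢
      exact le_trans h1 hx
    · -- a < b
      set t := b / (b - a) with ht
      have hba : 0 < b - a := by linarith
      have ht0 : 0 ≤ t := div_nonneg hb0 (le_of_lt hba)
      have ht1 : t ≤ 1 := by
        rw [ht, div_le_one hba]; linarith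
      have hsum : t + (1 - t) = 1 := by ring
      have hta : t * a + (1 - t) * b = 0 := by
        rw [ht]; field_simp; ring
      set y := x + a • e with hy
      set z := x + b • e with hz
      have hxcombo : t • y + (1 - t) • z = x := by
        rw [hy, hz]
        have : t • (x + a • e) + (1 - t) • (x + b • e)
            = (t + (1 - t)) • x + (t * a + (1 - t) * b) • e := by
          module
        rw [this, hsum, hta, one_smul, zero_smul, add_zero]
      have hfcombo : f x = t • f y + (1 - t) • f z := by
        rw [← hxcombo, Convex.combo_affine_apply hsum]
      have hvy : v (f y) ≤ v y := hdec y hyfr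
      have hvz : v (f z) ≤ v z := hdec z hzfr
      have hyK : v y ≤ R := by
        have := haS; rw [hS] at this; rw [hK] at this; exact this
      have hzK : v z ≤ R := by
        have := hbS; rw [hS] at this; rw [hK] at this; exact this
      have hconvest : v (t • f y + (1 - t) • f z)
          ≤ t * v (f y) + (1 - t) * v (f z) :=
        hconv.2 (Set.mem_univ _) (Set.mem_univ _) ht0 (by linarith) hsum
      rw [hK]
      show v (f x) ≤ R
      calc v (f x) = v (t • f y + (1 - t) • f z) := by rw [hfcombo]
        _ ≤ t * v (f y) + (1 - t) * v (f z) := hconvest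
        _ ≤ t * v y + (1 - t) * v z := by
            have h1 : t * v (f y) ≤ t * v y := mul_le_mul_of_nonneg_left hvy ht0
            have h2 : (1 - t) * v (f z) ≤ (1 - t) * v z :=
              mul_le_mul_of_nonneg_left hvz (by linarith)
            linarith
        _ ≤ t * R + (1 - t) * R := by
            have h1 : t * v y ≤ t * R := mul_le_mul_of_nonneg_left hyK ht0
            have h2 : (1 - t) * v z ≤ (1 - t) * R :=
              mul_le_mul_of_nonneg_left hzK (by linarith)
            linarith
        _ = R := by ring
end

section
/- Let v(x) = √(xᵀPx) be a norm on ℝⁿ induced by an inner product (P symmetric positive definite), let f(x) = Ax + b be an affine map, let X ⊆ ℝⁿ be a symmetric C-set (compact, convex, 0 ∈ interior(X), and x ∈ X ⟹ −x ∈ X), and let ρ ≥ 0. If v(Ax + b) ≤ ρ v(x) for all x ∈ ∂X, then v(Ax) ≤ ρ v(x) for all x ∈ ℝⁿ. -/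
open scoped Matrix

theorem contraction_on_boundary_implies_linear_contraction {n : ℕ}
    (P : Matrix (Fin n) (Fin n) ℝ) (hP : P.PosDef)
    (v : (Fin n → ℝ) → ℝ) (hv : ∀ x, v x = Real.sqrt (x ⬝ᵥ P.mulVec x))
    (A : Matrix (Fin n) (Fin n) ℝ) (b : Fin n → ℝ)
    (X : Set (Fin n → ℝ)) (hXc : IsCompact X) (hXconv : Convex ℝ X)
    (hX0 : (0 : Fin n → ℝ) ∈ interior X) (hXsym : ∀ x ∈ X, -x ∈ X)
    (ρ : ℝ) (hρ : 0 ≤ ρ)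
    (hcontr : ∀ x ∈ frontier X, v (A.mulVec x + b) ≤ ρ * v x) :
    ∀ x : Fin n → ℝ, v (A.mulVec x) ≤ ρ * v x := by
  have hquadnn : ∀ y : Fin n → ℝ, 0 ≤ y ⬝ᵥ P.mulVec y := by
    intro y
    have := hP.posSemidef.dotProduct_mulVec_nonneg y
    simpa using this
  have hsq : ∀ y : Fin n → ℝ, v y ^ 2 = y ⬝ᵥ P.mulVec y := by
    intro y; rw [hv]; exact Real.sq_sqrt (hquadnn y)
  have hvnn : ∀ y : Fin n → ℝ, 0 ≤ v y := by
    intro y; rw [hv]; exact Real.sqrt_nonneg _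
  have hvneg : ∀ y : Fin n → ℝ, v (-y) = v y := by
    intro y
    rw [hv, hv]
    congr 1
    simp [Matrix.mulVec_neg]
  have hvsmul : ∀ (c : ℝ) (y : Fin n → ℝ), 0 ≤ c → v (c • y) = c * v y := by
    intro c y hc
    rw [hv, hv]
    rw [Matrix.mulVec_smul, smul_dotProduct, dotProduct_smul,
      smul_eq_mul, smul_eq_mul, ← mul_assoc, ← sq]
    rw [Real.sqrt_mul (sq_nonneg c), Real.sqrt_sq hc]
  -- frontier step
  have hfront : ∀ y ∈ frontier X, v (A.mulVec y) ≤ ρ * v y := by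
    intro y hy
    have hnegX : -X = X := by
      apply Set.Subset.antisymm
      · intro z hz
        rw [Set.mem_neg] at hz
        simpa using hXsym _ hz
      · intro z hz
        rw [Set.mem_neg]
        exact hXsym _ hz
    have hpre : (Homeomorph.neg (Fin n → ℝ)) ⁻¹' X = X := by
      ext z
      simp only [Homeomorph.neg, Set.mem_preimage, Equiv.neg, Equiv.coe_fn_mk,
        Homeomorph.homeomorph_mk_coe, Equiv.coe_fn_mk]
      constructor
      · intro h; simpa using hXsym _ h
      · intro h; exact hXsym _ h
    have hy' : -y ∈ frontier X := by
      have h1 := Homeomorph.preimage_frontier (Homeomorph.neg (Fin n → ℝ)) X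
      rw [hpre] at h1
      rw [← h1]
      simpa using hy
    have h1 := hcontr y hy
    have h2 := hcontr (-y) hy'
    rw [hvneg] at h2
    set u := A.mulVec y with hu
    have h2' : v (-u + b) ≤ ρ * v y := by
      rwa [Matrix.mulVec_neg, ← hu] at h2
    -- parallelogram identity
    have hpar : v (u + b) ^ 2 + v (-u + b) ^ 2 = 2 * (u ⬝ᵥ P.mulVec u) + 2 * (b ⬝ᵥ P.mulVec b) := by
      rw [hsq, hsq]
      simp only [Matrix.mulVec_add, Matrix.mulVec_neg, add_dotProduct,
        dotProduct_add, neg_dotProduct, dotProduct_neg]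
      ring
    have husq : v u ^ 2 ≤ (ρ * v y) ^ 2 := by
      have hb := hquadnn b
      have h1sq : v (u + b) ^ 2 ≤ (ρ * v y) ^ 2 := by
        have := hvnn (u + b)
        nlinarith [mul_nonneg hρ (hvnn y)]
      have h2sq : v (-u + b) ^ 2 ≤ (ρ * v y) ^ 2 := by
        have := hvnn (-u + b)
        nlinarith [mul_nonneg hρ (hvnn y)]
      have : v u ^ 2 = u ⬝ᵥ P.mulVec u := hsq u
      nlinarith
    nlinarith [hvnn u, mul_nonneg hρ (hvnn y)]
  -- scaling step
  intro x
  by_cases hx : x = 0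
  · subst hx
    simp only [Matrix.mulVec_zero]
    have : v 0 = 0 := by rw [hv]; simp
    rw [this]; simp
  · have hXnhds : X ∈ nhds (0 : Fin n → ℝ) := mem_interior_iff_mem_nhds.mp hX0
    have habs : Absorbent ℝ X := absorbent_nhds_zero hXnhds
    have hbdd : Bornology.IsVonNBounded ℝ X := NormedSpace.isVonNBounded_of_isBounded (𝕜 := ℝ) hXc.isBounded
    set g := gauge X x with hg
    have hgpos : 0 < g := (gauge_pos habs hbdd).mpr hx
    have hy1 : gauge X (g⁻¹ • x) = 1 := by
      rw [gauge_smul_of_nonneg (inv_nonneg.mpr hgpos.le), smul_eq_mul, ← hg,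
        inv_mul_cancel₀ hgpos.ne']
    have hyf : g⁻¹ • x ∈ frontier X :=
      (gauge_eq_one_iff_mem_frontier hXconv hXnhds).mp hy1
    have hkey := hfront _ hyf
    rw [Matrix.mulVec_smul, hvsmul _ _ (inv_nonneg.mpr hgpos.le),
      hvsmul _ _ (inv_nonneg.mpr hgpos.le)] at hkey
    calc v (A.mulVec x) = g * (g⁻¹ * v (A.mulVec x)) := by
          field_simp
      _ ≤ g * (ρ * (g⁻¹ * v x)) := by
          apply mul_le_mul_of_nonneg_left _ hgpos.le
          linarith [hkey]
      _ = ρ * v x := by field_simp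
end

section
/- Let v be a norm on ℝⁿ induced by an inner product, f(x) = Ax + b affine, X ⊆ ℝⁿ a symmetric C-set and ρ ≥ 0. If v(Ax + b) ≤ ρ v(x) for all x ∈ ∂X, then v(Ax + b) ≤ ρ v(x) for all x ∈ ℝⁿ \ X. -/
open scoped Matrix Topology MatrixOrder

lemma vP_eq {n : ℕ} (P : Matrix (Fin n) (Fin n) ℝ) (hP : P.PosDef) :
    ∀ z : Fin n → ℝ, z ⬝ᵥ P.mulVec z =
      ((CFC.sqrt P).mulVec z) ⬝ᵥ ((CFC.sqrt P).mulVec z) := by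
  intro z
  set S := CFC.sqrt P with hS
  have h1 : S * S = P := CFC.sqrt_mul_sqrt_self P hP.posSemidef.nonneg
  have h2 : Sᵀ = S := by
    have := (Matrix.nonneg_iff_posSemidef.mp (CFC.sqrt_nonneg P)).1
    simpa [Matrix.IsHermitian] using this
  calc z ⬝ᵥ P.mulVec z = z ⬝ᵥ (S * S).mulVec z := by rw [h1]
    _ = z ⬝ᵥ S.mulVec (S.mulVec z) := by rw [Matrix.mulVec_mulVec]
    _ = (Sᵀ.mulVec z) ⬝ᵥ (S.mulVec z) := by
        rw [Matrix.dotProduct_mulVec, ← Matrix.mulVec_transpose]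
    _ = (S.mulVec z) ⬝ᵥ (S.mulVec z) := by rw [h2]

lemma euclid_norm {n : ℕ} (u : Fin n → ℝ) :
    Real.sqrt (u ⬝ᵥ u) = ‖(WithLp.equiv 2 (Fin n → ℝ)).symm u‖ := by
  rw [EuclideanSpace.norm_eq]
  congr 1
  simp [dotProduct, Real.norm_eq_abs, sq_abs, pow_two]

lemma sqrt_quad_add {n : ℕ} (P : Matrix (Fin n) (Fin n) ℝ) (hP : P.PosDef) (x y : Fin n → ℝ) :
    Real.sqrt ((x + y) ⬝ᵥ P.mulVec (x + y)) ≤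
      Real.sqrt (x ⬝ᵥ P.mulVec x) + Real.sqrt (y ⬝ᵥ P.mulVec y) := by
  rw [vP_eq P hP, vP_eq P hP, vP_eq P hP, euclid_norm, euclid_norm, euclid_norm,
    Matrix.mulVec_add]
  simpa using norm_add_le (WithLp.toLp 2 ((CFC.sqrt P).mulVec x)) (WithLp.toLp 2 ((CFC.sqrt P).mulVec y))

lemma sqrt_quad_smul {n : ℕ} (P : Matrix (Fin n) (Fin n) ℝ) (c : ℝ) (z : Fin n → ℝ) :
    Real.sqrt ((c • z) ⬝ᵥ P.mulVec (c • z)) = |c| * Real.sqrt (z ⬝ᵥ P.mulVec z) := by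
  have h : (c • z) ⬝ᵥ P.mulVec (c • z) = c ^ 2 * (z ⬝ᵥ P.mulVec z) := by
    rw [Matrix.mulVec_smul, smul_dotProduct, dotProduct_smul]
    ring_nf
  rw [h, Real.sqrt_mul (sq_nonneg c), Real.sqrt_sq_eq_abs]

theorem contraction_outside_symmetric_Cset {n : ℕ}
    (P : Matrix (Fin n) (Fin n) ℝ) (hP : P.PosDef)
    (v : (Fin n → ℝ) → ℝ) (hv : ∀ x, v x = Real.sqrt (x ⬝ᵥ P.mulVec x))
    (A : Matrix (Fin n) (Fin n) ℝ) (b : Fin n → ℝ)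
    (X : Set (Fin n → ℝ)) (hXc : IsCompact X) (hXconv : Convex ℝ X)
    (hX0 : (0 : Fin n → ℝ) ∈ interior X) (hXsym : ∀ x ∈ X, -x ∈ X)
    (ρ : ℝ) (hρ : 0 ≤ ρ)
    (hcontr : ∀ x ∈ frontier X, v (A.mulVec x + b) ≤ ρ * v x) :
    ∀ x : Fin n → ℝ, x ∉ X → v (A.mulVec x + b) ≤ ρ * v x := by
  intro x hx
  have hnhds : X ∈ 𝓝 (0 : Fin n → ℝ) := mem_interior_iff_mem_nhds.mp hX0
  have hXcl : IsClosed X := hXc.isClosed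
  set g := gauge X x with hg
  have hg1 : 1 < g := by
    by_contra h
    push_neg at h
    exact hx (hXcl.closure_eq ▸ (gauge_le_one_iff_mem_closure hXconv hnhds).mp h)
  have hg0 : (0 : ℝ) < g := lt_trans one_pos hg1
  set y := g⁻¹ • x with hy
  have hxy : x = g • y := by
    rw [hy, smul_smul, mul_inv_cancel₀ (ne_of_gt hg0), one_smul]
  have hgy : gauge X y = 1 := by
    rw [hy, gauge_smul_of_nonneg (le_of_lt (inv_pos.mpr hg0))]
    simp [smul_eq_mul, inv_mul_cancel₀ (ne_of_gt hg0), hg]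
    exact inv_mul_cancel₀ (ne_of_gt hg0)
  have hyf : y ∈ frontier X := (gauge_eq_one_iff_mem_frontier hXconv hnhds).mp hgy
  have hnyf : -y ∈ frontier X := by
    refine (gauge_eq_one_iff_mem_frontier hXconv hnhds).mp ?_
    rw [gauge_neg hXsym, hgy]
  set α := (g + 1) / 2 with hα
  set β := (g - 1) / 2 with hβ
  have hα0 : 0 ≤ α := by positivity
  have hβ0 : 0 ≤ β := by rw [hβ]; linarith
  have hsum : α + β = g := by rw [hα, hβ]; ring
  have hdiff : α - β = 1 := by rw [hα, hβ]; ring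
  have hdecomp : A.mulVec x + b = α • (A.mulVec y + b) + β • (-(A.mulVec (-y) + b)) := by
    rw [hxy, Matrix.mulVec_smul, Matrix.mulVec_neg]
    have h1 : g = α + β := hsum.symm
    have h2 : (1 : ℝ) = α - β := hdiff.symm
    rw [h1]
    nth_rewrite 2 [show b = (1:ℝ) • b by simp]
    rw [h2]
    module
  simp only [hv] at hcontr ⊢
  have h1 : Real.sqrt ((A.mulVec y + b) ⬝ᵥ P.mulVec (A.mulVec y + b)) ≤
      ρ * Real.sqrt (y ⬝ᵥ P.mulVec y) := hcontr y hyf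
  have h2 : Real.sqrt ((A.mulVec (-y) + b) ⬝ᵥ P.mulVec (A.mulVec (-y) + b)) ≤
      ρ * Real.sqrt (y ⬝ᵥ P.mulVec y) := by
    have h2' := hcontr (-y) hnyf
    have heq : Real.sqrt ((-y) ⬝ᵥ P.mulVec (-y)) = Real.sqrt (y ⬝ᵥ P.mulVec y) := by
      rw [show (-y : Fin n → ℝ) = (-1 : ℝ) • y by simp, sqrt_quad_smul]; simp
    rwa [heq] at h2'
  have hxnorm : Real.sqrt (x ⬝ᵥ P.mulVec x) = g * Real.sqrt (y ⬝ᵥ P.mulVec y) := by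
    rw [hxy, sqrt_quad_smul, abs_of_pos hg0]
  calc Real.sqrt ((A.mulVec x + b) ⬝ᵥ P.mulVec (A.mulVec x + b))
      = Real.sqrt ((α • (A.mulVec y + b) + β • (-(A.mulVec (-y) + b))) ⬝ᵥ
          P.mulVec (α • (A.mulVec y + b) + β • (-(A.mulVec (-y) + b)))) := by rw [hdecomp]
    _ ≤ Real.sqrt ((α • (A.mulVec y + b)) ⬝ᵥ P.mulVec (α • (A.mulVec y + b))) +
        Real.sqrt ((β • (-(A.mulVec (-y) + b))) ⬝ᵥ P.mulVec (β • (-(A.mulVec (-y) + b)))) :=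
          sqrt_quad_add P hP _ _
    _ = α * Real.sqrt ((A.mulVec y + b) ⬝ᵥ P.mulVec (A.mulVec y + b)) +
        β * Real.sqrt ((A.mulVec (-y) + b) ⬝ᵥ P.mulVec (A.mulVec (-y) + b)) := by
          rw [show (β • (-(A.mulVec (-y) + b))) = (-β) • (A.mulVec (-y) + b) by module,
            sqrt_quad_smul, sqrt_quad_smul, abs_of_nonneg hα0, abs_neg, abs_of_nonneg hβ0]
    _ ≤ α * (ρ * Real.sqrt (y ⬝ᵥ P.mulVec y)) + β * (ρ * Real.sqrt (y ⬝ᵥ P.mulVec y)) := by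
          gcongr
    _ = ρ * (g * Real.sqrt (y ⬝ᵥ P.mulVec y)) := by rw [← hsum]; ring
    _ = ρ * Real.sqrt (x ⬝ᵥ P.mulVec x) := by rw [hxnorm]
end

section
/- Let v be a norm on ℝⁿ induced by an inner product, f(x) = Ax + b affine, X ⊆ ℝⁿ a symmetric C-set, and 0 ≤ ρ < 1. If v(Ax + b) ≤ ρ v(x) for all x ∈ ∂X, then the set K := {x ∈ ℝⁿ : v(x) ≤ max_{y∈∂X} v(y)} is forward invariant for x⁺ = Ax + b, i.e., f(K) ⊆ K. -/
open scoped Matrix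
open Topology

theorem sublevel_forward_invariant_of_boundary_contraction {n : ℕ}
    (P : Matrix (Fin n) (Fin n) ℝ) (hP : P.PosDef)
    (v : (Fin n → ℝ) → ℝ) (hv : ∀ x, v x = Real.sqrt (x ⬝ᵥ P.mulVec x))
    (A : Matrix (Fin n) (Fin n) ℝ) (b : Fin n → ℝ)
    (X : Set (Fin n → ℝ)) (hXc : IsCompact X) (hXconv : Convex ℝ X)
    (hX0 : (0 : Fin n → ℝ) ∈ interior X) (hXsym : ∀ x ∈ X, -x ∈ X)
    (ρ : ℝ) (hρ0 : 0 ≤ ρ) (hρ1 : ρ < 1)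
    (hcontr : ∀ x ∈ frontier X, v (A.mulVec x + b) ≤ ρ * v x)
    (K : Set (Fin n → ℝ)) (hK : K = {x | v x ≤ sSup (v '' frontier X)}) :
    ∀ x ∈ K, A.mulVec x + b ∈ K := by
  subst hK
  intro x hx
  rcases Nat.eq_zero_or_pos n with rfl | hn
  · have : A.mulVec x + b = x := Subsingleton.elim _ _
    rwa [this]
  set q : (Fin n → ℝ) → ℝ := fun z => z ⬝ᵥ P.mulVec z with hqdef
  have hq0 : ∀ z, 0 ≤ q z := by
    intro z
    have := hP.posSemidef.dotProduct_mulVec_nonneg z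
    simpa using this
  have hsymm : ∀ a c : Fin n → ℝ, a ⬝ᵥ P.mulVec c = c ⬝ᵥ P.mulVec a := by
    intro a c
    have hPT : Pᵀ = P := by
      have := hP.1
      rwa [Matrix.IsHermitian, Matrix.conjTranspose_eq_transpose_of_trivial] at this
    rw [Matrix.dotProduct_mulVec, ← Matrix.mulVec_transpose, hPT, dotProduct_comm]
  have hexp : ∀ (t : ℝ) (u w : Fin n → ℝ),
      q (t • u + w) = t ^ 2 * q u + 2 * t * (u ⬝ᵥ P.mulVec w) + q w := by
    intro t u w
    simp only [hqdef, Matrix.mulVec_add, Matrix.mulVec_smul, dotProduct_add,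
      add_dotProduct, smul_dotProduct, dotProduct_smul, smul_eq_mul]
    rw [hsymm w u]
    ring
  -- continuity of v
  have hqcont : Continuous q := by
    simp only [hqdef, dotProduct, Matrix.mulVec]
    fun_prop
  have hvcont : Continuous v := by
    have hveq : v = fun z => Real.sqrt (q z) := funext hv
    rw [hveq]
    exact Real.continuous_sqrt.comp hqcont
  -- frontier is compact
  have hfsub : frontier X ⊆ X := by
    have h := frontier_subset_closure (s := X)
    rwa [hXc.isClosed.closure_eq] at h
  have hfc : IsCompact (frontier X) := hXc.of_isClosed_subset isClosed_frontier hfsub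
  have hbddA : BddAbove (v '' frontier X) := (hfc.image hvcont).bddAbove
  set M := sSup (v '' frontier X) with hMdef
  have hleM : ∀ y ∈ frontier X, v y ≤ M := fun y hy => le_csSup hbddA ⟨y, hy, rfl⟩
  -- frontier is symmetric
  have hXneg : Neg.neg ⁻¹' X = X := by
    ext z
    constructor
    · intro h
      have := hXsym _ h
      simpa using this
    · intro h
      exact hXsym _ h
  have hfneg : ∀ y ∈ frontier X, -y ∈ frontier X := by
    intro y hy
    have h1 : Neg.neg ⁻¹' frontier X = frontier (Neg.neg ⁻¹' X) :=
      (Homeomorph.neg (Fin n → ℝ)).preimage_frontier X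
    have : y ∈ Neg.neg ⁻¹' frontier X := by rw [h1, hXneg]; exact hy
    simpa using this
  -- gauge setup
  have hXnhds : X ∈ 𝓝 (0 : Fin n → ℝ) := mem_interior_iff_mem_nhds.1 hX0
  have habs : Absorbent ℝ X := absorbent_nhds_zero hXnhds
  have hbddX : Bornology.IsVonNBounded ℝ X :=
    (NormedSpace.isVonNBounded_iff ℝ).2 hXc.isBounded
  obtain ⟨y, hy, t, ht0, hxy⟩ : ∃ y ∈ frontier X, ∃ t : ℝ, 0 ≤ t ∧ x = t • y := by
    by_cases hx0 : x = 0
    · have hu : ((fun _ => (1 : ℝ)) : Fin n → ℝ) ≠ 0 := by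
        intro h
        have := congrFun h ⟨0, hn⟩
        simpa using this
      set g := gauge X (fun _ => (1 : ℝ)) with hg0
      have hg : 0 < g := (gauge_pos habs hbddX).2 hu
      refine ⟨g⁻¹ • (fun _ => (1 : ℝ)), ?_, 0, le_refl _, by simp [hx0]⟩
      rw [← gauge_eq_one_iff_mem_frontier hXconv hXnhds,
        gauge_smul_of_nonneg (inv_nonneg.2 hg.le), smul_eq_mul, inv_mul_cancel₀ hg.ne']
    · set g := gauge X x with hg0
      have hg : 0 < g := (gauge_pos habs hbddX).2 hx0
      refine ⟨g⁻¹ • x, ?_, g, hg.le, (smul_inv_smul₀ hg.ne' x).symm⟩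
      rw [← gauge_eq_one_iff_mem_frontier hXconv hXnhds,
        gauge_smul_of_nonneg (inv_nonneg.2 hg.le), smul_eq_mul, inv_mul_cancel₀ hg.ne']
  -- squaring helper
  have key : ∀ (z : Fin n → ℝ) (r : ℝ), 0 ≤ r → v z ≤ r → q z ≤ r ^ 2 := by
    intro z r hr h
    rw [hv] at h
    calc q z = Real.sqrt (q z) ^ 2 := (Real.sq_sqrt (hq0 z)).symm
      _ ≤ r ^ 2 := pow_le_pow_left₀ (Real.sqrt_nonneg _) h 2
  have hv0 : ∀ z, 0 ≤ v z := fun z => by rw [hv]; exact Real.sqrt_nonneg _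
  have hM0 : 0 ≤ M := le_trans (hv0 y) (hleM y hy)
  have hvy2 : v y ^ 2 = q y := by rw [hv]; exact Real.sq_sqrt (hq0 y)
  -- q-form of the contraction hypotheses
  have hH1 : q (A.mulVec y + b) ≤ ρ ^ 2 * q y := by
    have h := key _ _ (mul_nonneg hρ0 (hv0 y)) (hcontr y hy)
    calc q (A.mulVec y + b) ≤ (ρ * v y) ^ 2 := h
      _ = ρ ^ 2 * q y := by rw [mul_pow, hvy2]
  have hH2 : q (-(A.mulVec y) + b) ≤ ρ ^ 2 * q y := by
    have h := key _ _ (mul_nonneg hρ0 (hv0 (-y))) (hcontr (-y) (hfneg y hy))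
    have hvny : v (-y) = v y := by
      rw [hv, hv]
      congr 1
      simp [Matrix.mulVec_neg, neg_dotProduct, dotProduct_neg]
    rw [Matrix.mulVec_neg] at h
    rw [hvny] at h
    calc q (-(A.mulVec y) + b) ≤ (ρ * v y) ^ 2 := h
      _ = ρ ^ 2 * q y := by rw [mul_pow, hvy2]
  -- expansions
  set c : ℝ := (A.mulVec y) ⬝ᵥ P.mulVec b with hcdef
  have e1 : q (A.mulVec y + b) = q (A.mulVec y) + 2 * c + q b := by
    have h := hexp 1 (A.mulVec y) b
    simpa using h
  have e2 : q (-(A.mulVec y) + b) = q (A.mulVec y) - 2 * c + q b := by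
    have h := hexp (-1) (A.mulVec y) b
    rw [neg_one_smul] at h
    have hq1 : q (-(A.mulVec y)) = q (A.mulVec y) := by
      simp [hqdef, Matrix.mulVec_neg, neg_dotProduct, dotProduct_neg]
    rw [h]
    ring
  have eX : q (A.mulVec x + b) = t ^ 2 * q (A.mulVec y) + 2 * t * c + q b := by
    rw [hxy, Matrix.mulVec_smul]
    exact hexp t (A.mulVec y) b
  have hqx : q x = t ^ 2 * q y := by
    rw [hxy]
    simp only [hqdef, Matrix.mulVec_smul, smul_dotProduct, dotProduct_smul,
      smul_eq_mul]
    ring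
  have hxM : q x ≤ M ^ 2 := key x M hM0 hx
  have hyM2 : q y ≤ M ^ 2 := key y M hM0 (hleM y hy)
  -- main inequality in quadratic form
  have hgoal : q (A.mulVec x + b) ≤ M ^ 2 := by
    rw [eX]
    rw [e1] at hH1
    rw [e2] at hH2
    have hqA := hq0 (A.mulVec y)
    have hqb := hq0 b
    have hqy := hq0 y
    rw [hqx] at hxM
    have h3 : q (A.mulVec y) + q b ≤ ρ ^ 2 * q y := by linarith
    have hρ2 : ρ ^ 2 ≤ 1 := by nlinarith
    rcases le_total t 1 with hle | hle
    · nlinarith [mul_le_mul_of_nonneg_left hH1 ht0,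
        mul_le_mul_of_nonneg_left h3 (sub_nonneg.2 hle),
        mul_nonneg (mul_nonneg ht0 (sub_nonneg.2 hle)) hqA,
        mul_nonneg (mul_nonneg (sub_nonneg.2 hρ1.le) (by linarith : (0:ℝ) ≤ 1 + ρ)) hqy]
    · nlinarith [mul_le_mul_of_nonneg_left hH1 ht0,
        mul_le_mul_of_nonneg_left h3 (mul_nonneg ht0 (sub_nonneg.2 hle)),
        mul_nonneg (mul_nonneg (sub_nonneg.2 hle) (by linarith : (0:ℝ) ≤ t + 1)) hqb,
        mul_nonneg (mul_nonneg (sub_nonneg.2 hρ2) (mul_nonneg ht0 ht0)) hqy]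
  show v (A.mulVec x + b) ≤ M
  rw [hv]
  have h := Real.sqrt_le_sqrt hgoal
  rwa [Real.sqrt_sq hM0] at h
end

section
/- Let v be a norm induced by an inner product on ℝⁿ, X a symmetric C-set, ρ < 1, and suppose v(A_i x + b_i) ≤ ρ v(x) for all x ∈ ∂X and all i ∈ {1,…,M}. Then the set K := {x : v(x) ≤ max_{y∈∂X} v(y)} satisfies X ⊆ K and v(A_i x + b_i) < v(x) for every x ∉ K and every i. -/
open scoped Matrix

private lemma ray_frontier {n : ℕ} {X : Set (Fin n → ℝ)} (hXc : IsCompact X)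
    (hXconv : Convex ℝ X) (hX0 : (0 : Fin n → ℝ) ∈ interior X)
    {x : Fin n → ℝ} (hx : x ≠ 0) :
    ∃ t : ℝ, 0 < t ∧ t • x ∈ frontier X ∧ (x ∈ X → 1 ≤ t) ∧ (x ∉ X → t ≤ 1) := by
  have hxn : 0 < ‖x‖ := norm_pos_iff.mpr hx
  set T : Set ℝ := {t : ℝ | 0 ≤ t ∧ t • x ∈ X} with hT
  have hX0' : (0 : Fin n → ℝ) ∈ X := interior_subset hX0
  have hT0 : (0 : ℝ) ∈ T := ⟨le_refl 0, by simpa using hX0'⟩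
  have hTne : T.Nonempty := ⟨0, hT0⟩
  obtain ⟨R, hR⟩ := (Metric.isBounded_iff_subset_closedBall 0).mp hXc.isBounded
  have hTbdd : BddAbove T := by
    refine ⟨R / ‖x‖, fun t ht => ?_⟩
    have h1 : ‖t • x‖ ≤ R := by simpa using Metric.mem_closedBall.mp (hR ht.2)
    have h2 : ‖t • x‖ = t * ‖x‖ := by
      rw [norm_smul, Real.norm_eq_abs, abs_of_nonneg ht.1]
    rw [h2] at h1
    exact (le_div_iff₀ hxn).mpr h1
  have hTclosed : IsClosed T := by
    have : T = Set.Ici (0:ℝ) ∩ (fun t : ℝ => t • x) ⁻¹' X := by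
      ext t; simp [hT, Set.mem_Ici, and_comm]
    rw [this]
    exact isClosed_Ici.inter (hXc.isClosed.preimage (continuous_id.smul continuous_const))
  set t₀ := sSup T with ht₀
  have ht₀T : t₀ ∈ T := hTclosed.csSup_mem hTne hTbdd
  -- t₀ > 0
  obtain ⟨r, hr0, hball⟩ := Metric.mem_nhds_iff.mp (mem_interior_iff_mem_nhds.mp hX0)
  have hεT : r / (2 * ‖x‖) ∈ T := by
    constructor
    · positivity
    · apply hball
      rw [Metric.mem_ball, dist_zero_right, norm_smul, Real.norm_eq_abs,
        abs_of_nonneg (by positivity)]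
      rw [div_mul_eq_mul_div, mul_comm]
      rw [div_lt_iff₀ (by positivity)]
      nlinarith
  have ht₀pos : 0 < t₀ := lt_of_lt_of_le (by positivity) (le_csSup hTbdd hεT)
  -- not in interior
  have hnotint : t₀ • x ∉ interior X := by
    intro hmem
    have hopen : IsOpen ((fun t : ℝ => t • x) ⁻¹' interior X) :=
      isOpen_interior.preimage (continuous_id.smul continuous_const)
    obtain ⟨δ, hδ0, hδ⟩ := Metric.isOpen_iff.mp hopen t₀ hmem
    have hmem' : (t₀ + δ / 2) ∈ T := by
      refine ⟨by linarith [ht₀T.1], interior_subset (hδ ?_)⟩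
      rw [Metric.mem_ball, Real.dist_eq]
      rw [abs_of_nonneg (by linarith)]
      · linarith
    have := le_csSup hTbdd hmem'
    linarith
  have hfront : t₀ • x ∈ frontier X := ⟨subset_closure ht₀T.2, hnotint⟩
  refine ⟨t₀, ht₀pos, hfront, fun hxX => le_csSup hTbdd ⟨zero_le_one, by simpa using hxX⟩,
    fun hxX => ?_⟩
  by_contra h
  push_neg at h
  apply hxX
  have : (1 / t₀) • (t₀ • x) ∈ X := by
    apply hXconv.smul_mem_of_zero_mem hX0' ht₀T.2
    constructor
    · positivity
    · rw [div_le_one ht₀pos]; linarith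
  rwa [smul_smul, one_div, inv_mul_cancel₀ (ne_of_gt ht₀pos), one_smul] at this

theorem sublevel_contains_and_strict_decrease_outside {n M : ℕ}
    (P : Matrix (Fin n) (Fin n) ℝ) (hP : P.PosDef)
    (v : (Fin n → ℝ) → ℝ) (hv : ∀ x, v x = Real.sqrt (x ⬝ᵥ P.mulVec x))
    (A : Fin M → Matrix (Fin n) (Fin n) ℝ) (b : Fin M → (Fin n → ℝ))
    (X : Set (Fin n → ℝ)) (hXc : IsCompact X) (hXconv : Convex ℝ X)
    (hX0 : (0 : Fin n → ℝ) ∈ interior X) (hXsym : ∀ x ∈ X, -x ∈ X)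
    (ρ : ℝ) (hρ0 : 0 ≤ ρ) (hρ1 : ρ < 1)
    (hcontr : ∀ i : Fin M, ∀ x ∈ frontier X, v ((A i).mulVec x + b i) ≤ ρ * v x)
    (K : Set (Fin n → ℝ)) (hK : K = {x | v x ≤ sSup (v '' frontier X)}) :
    X ⊆ K ∧ ∀ i : Fin M, ∀ x : Fin n → ℝ, x ∉ K → v ((A i).mulVec x + b i) < v x := by
  -- quadratic form basics
  have hPsym : ∀ i j, P i j = P j i := fun i j => by
    have := hP.1.apply j i
    simpa using this
  have hsym : ∀ x y : Fin n → ℝ, x ⬝ᵥ P.mulVec y = y ⬝ᵥ P.mulVec x := by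
    intro x y
    simp only [dotProduct, Matrix.mulVec, Finset.mul_sum]
    rw [Finset.sum_comm]
    exact Finset.sum_congr rfl fun i _ => Finset.sum_congr rfl fun j _ => by rw [hPsym j i]; ring
  have hQ0 : ∀ x, 0 ≤ (x ⬝ᵥ P.mulVec x) := by
    intro x
    rcases eq_or_ne x 0 with rfl | hx
    · simp
    · exact le_of_lt (by simpa using hP.dotProduct_mulVec_pos hx)
  have hQpos : ∀ x, x ≠ 0 → 0 < (x ⬝ᵥ P.mulVec x) := fun x hx => by simpa using hP.dotProduct_mulVec_pos hx
  have hvnonneg : ∀ x, 0 ≤ v x := fun x => by rw [hv]; exact Real.sqrt_nonneg _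
  have hvzero : ∀ x, v x = 0 → x = 0 := by
    intro x hx
    by_contra h
    have := hQpos x h
    rw [hv x] at hx
    have := Real.sqrt_pos.mpr this
    linarith
  -- homogeneity
  have hQsmul : ∀ (c : ℝ) (x), ((c • x) ⬝ᵥ P.mulVec (c • x)) = c ^ 2 * (x ⬝ᵥ P.mulVec x) := by
    intro c x
    simp only [Matrix.mulVec_smul, dotProduct_smul, smul_dotProduct,
      smul_eq_mul]
    ring
  have hvsmul : ∀ (c : ℝ) (x), v (c • x) = |c| * v x := by
    intro c x
    rw [hv, hv, hQsmul, Real.sqrt_mul (sq_nonneg c), Real.sqrt_sq_eq_abs]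
  -- bilinear expansion
  have hexp : ∀ x y : Fin n → ℝ, ((x+y) ⬝ᵥ P.mulVec (x+y)) = (x ⬝ᵥ P.mulVec x) + 2 * (x ⬝ᵥ P.mulVec y) + (y ⬝ᵥ P.mulVec y) := by
    intro x y
    simp only [Matrix.mulVec_add, dotProduct_add, add_dotProduct]
    rw [hsym y x]
    ring
  -- Cauchy-Schwarz
  have hCS : ∀ x y : Fin n → ℝ, (x ⬝ᵥ P.mulVec y) ^ 2 ≤ (x ⬝ᵥ P.mulVec x) * (y ⬝ᵥ P.mulVec y) := by
    intro x y
    have hpoly : ∀ t : ℝ, 0 ≤ (y ⬝ᵥ P.mulVec y) * (t * t) + (2 * (x ⬝ᵥ P.mulVec y)) * t + (x ⬝ᵥ P.mulVec x) := by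
      intro t
      have := hQ0 (x + t • y)
      rw [hexp x (t • y), hQsmul t y] at this
      have h2 : x ⬝ᵥ P.mulVec (t • y) = t * (x ⬝ᵥ P.mulVec y) := by
        simp [Matrix.mulVec_smul]
      rw [h2] at this
      nlinarith
    have := discrim_le_zero hpoly
    rw [discrim] at this
    nlinarith
  -- triangle inequality
  have htri : ∀ x y : Fin n → ℝ, v (x + y) ≤ v x + v y := by
    intro x y
    have hb : x ⬝ᵥ P.mulVec y ≤ v x * v y := by
      have h1 : |x ⬝ᵥ P.mulVec y| = Real.sqrt ((x ⬝ᵥ P.mulVec y) ^ 2) := by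
        rw [Real.sqrt_sq_eq_abs]
      calc x ⬝ᵥ P.mulVec y ≤ |x ⬝ᵥ P.mulVec y| := le_abs_self _
        _ = Real.sqrt ((x ⬝ᵥ P.mulVec y) ^ 2) := h1
        _ ≤ Real.sqrt ((x ⬝ᵥ P.mulVec x) * (y ⬝ᵥ P.mulVec y)) := Real.sqrt_le_sqrt (hCS x y)
        _ = v x * v y := by rw [Real.sqrt_mul (hQ0 x), hv, hv]
    rw [hv, hv, hv]
    rw [show Real.sqrt ((x ⬝ᵥ P.mulVec x)) + Real.sqrt ((y ⬝ᵥ P.mulVec y)) = Real.sqrt ((Real.sqrt ((x ⬝ᵥ P.mulVec x)) + Real.sqrt ((y ⬝ᵥ P.mulVec y)))^2)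
      by rw [Real.sqrt_sq (by positivity)]]
    apply Real.sqrt_le_sqrt
    have hx2 : Real.sqrt ((x ⬝ᵥ P.mulVec x)) ^ 2 = (x ⬝ᵥ P.mulVec x) := Real.sq_sqrt (hQ0 x)
    have hy2 : Real.sqrt ((y ⬝ᵥ P.mulVec y)) ^ 2 = (y ⬝ᵥ P.mulVec y) := Real.sq_sqrt (hQ0 y)
    have := hexp x y
    have hb' : x ⬝ᵥ P.mulVec y ≤ Real.sqrt ((x ⬝ᵥ P.mulVec x)) * Real.sqrt ((y ⬝ᵥ P.mulVec y)) := by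
      rw [hv, hv] at hb; exact hb
    nlinarith
  -- continuity of v
  have hvcont : Continuous v := by
    have : v = fun x => Real.sqrt ((x ⬝ᵥ P.mulVec x)) := funext hv
    rw [this]
    apply Real.continuous_sqrt.comp
    simp only [dotProduct, Matrix.mulVec]
    refine continuous_finset_sum _ fun i _ => ?_
    exact (continuous_apply i).mul
      (continuous_finset_sum _ fun j _ => continuous_const.mul (continuous_apply j))
  -- the sup
  set S := sSup (v '' frontier X) with hS
  have hfcomp : IsCompact (frontier X) :=
    hXc.of_isClosed_subset isClosed_frontier hXc.isClosed.frontier_subset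
  have hbdd : BddAbove (v '' frontier X) := (hfcomp.image hvcont).bddAbove
  have hSnonneg : 0 ≤ S := Real.sSup_nonneg (by rintro a ⟨y, _, rfl⟩; exact hvnonneg y)
  have hle : ∀ y ∈ frontier X, v y ≤ S := fun y hy => le_csSup hbdd ⟨y, hy, rfl⟩
  -- Part 1
  have part1 : X ⊆ K := by
    intro x hxX
    rw [hK]
    rcases eq_or_ne x 0 with rfl | hx
    · show v 0 ≤ S
      rw [hv]
      simp
      exact hSnonneg
    · obtain ⟨t, ht0, htf, ht1, -⟩ := ray_frontier hXc hXconv hX0 hx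
      have h1 : v (t • x) ≤ S := hle _ htf
      rw [hvsmul, abs_of_pos ht0] at h1
      have := ht1 hxX
      show v x ≤ S
      nlinarith [hvnonneg x]
  refine ⟨part1, ?_⟩
  intro i x hxK
  rw [hK] at hxK
  have hvx : S < v x := by
    simp only [Set.mem_setOf_eq, not_le] at hxK; exact hxK
  have hvxpos : 0 < v x := lt_of_le_of_lt hSnonneg hvx
  have hx0 : x ≠ 0 := by
    intro h; subst h
    rw [hv] at hvxpos; simp at hvxpos
  have hxX : x ∉ X := fun h => by
    have := part1 h; rw [hK] at this; exact absurd this (by simpa using hxK)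
  obtain ⟨t, ht0, htf, -, ht1⟩ := ray_frontier hXc hXconv hX0 hx0
  have htle1 : t ≤ 1 := ht1 hxX
  set y := t • x with hy
  -- -y in frontier
  have hXneg : Neg.neg ⁻¹' X = X := by
    ext z
    constructor
    · intro hz; simpa using hXsym _ hz
    · intro hz; exact hXsym _ hz
  have hfneg : ∀ z ∈ frontier X, -z ∈ frontier X := by
    intro z hz
    have : frontier (Neg.neg ⁻¹' X) = Neg.neg ⁻¹' frontier X :=
      ((Homeomorph.neg (Fin n → ℝ)).preimage_frontier X).symm
    rw [hXneg] at this
    rw [← Set.mem_preimage, ← this]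
    exact hz
  have hyf : y ∈ frontier X := htf
  have hnyf : -y ∈ frontier X := hfneg y hyf
  -- contraction bounds
  have hu := hcontr i y hyf
  have hw := hcontr i (-y) hnyf
  rw [show v (-y) = v y by rw [← neg_one_smul ℝ y, hvsmul]; simp] at hw
  set lam := 1 / t with hlam
  have hlam1 : 1 ≤ lam := by rw [hlam]; rw [le_div_iff₀ ht0]; linarith
  have hxy : x = lam • y := by
    rw [hy, smul_smul, hlam, one_div, inv_mul_cancel₀ (ne_of_gt ht0), one_smul]
  have hvxy : v x = lam * v y := by
    rw [hxy, hvsmul, abs_of_pos (by linarith)]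
  set c1 := (lam + 1) / 2 with hc1
  set c2 := (lam - 1) / 2 with hc2
  have hc1n : 0 ≤ c1 := by rw [hc1]; linarith
  have hc2n : 0 ≤ c2 := by rw [hc2]; linarith
  have hdecomp : (A i).mulVec x + b i =
      c1 • ((A i).mulVec y + b i) + (-c2) • ((A i).mulVec (-y) + b i) := by
    rw [hxy]
    funext j
    simp only [Pi.add_apply, Pi.smul_apply, Pi.neg_apply, Matrix.mulVec_smul,
      Matrix.mulVec_neg, smul_eq_mul, hc1, hc2]
    ring
  have htriapp : v ((A i).mulVec x + b i) ≤ c1 * v ((A i).mulVec y + b i)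
      + c2 * v ((A i).mulVec (-y) + b i) := by
    rw [hdecomp]
    calc v (c1 • ((A i).mulVec y + b i) + (-c2) • ((A i).mulVec (-y) + b i))
        ≤ v (c1 • ((A i).mulVec y + b i)) + v ((-c2) • ((A i).mulVec (-y) + b i)) := htri _ _
      _ = c1 * v ((A i).mulVec y + b i) + c2 * v ((A i).mulVec (-y) + b i) := by
          rw [hvsmul, hvsmul, abs_of_nonneg hc1n, abs_neg, abs_of_nonneg hc2n]
  have hvynn : 0 ≤ v y := hvnonneg y
  have key : v ((A i).mulVec x + b i) ≤ ρ * v x := by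
    calc v ((A i).mulVec x + b i)
        ≤ c1 * v ((A i).mulVec y + b i) + c2 * v ((A i).mulVec (-y) + b i) := htriapp
      _ ≤ c1 * (ρ * v y) + c2 * (ρ * v y) := by
          gcongr
      _ = ρ * (lam * v y) := by rw [hc1, hc2]; ring
      _ = ρ * v x := by rw [hvxy]
  calc v ((A i).mulVec x + b i) ≤ ρ * v x := key
    _ < 1 * v x := by exact mul_lt_mul_of_pos_right hρ1 hvxpos
    _ = v x := one_mul _
end
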